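/- arXiv:2508.12924 — 3 statements merged into one kernel-verified Lean document; each statement's English description precedes it below -/
import Mathlib

section
/- Let s ∈ {0,1}ⁿ be primitive with first digit 1. (a) If ι(s) is not a cyclic shift of s, then the strings s, F(s), F²(s), …, F^{n−1}(s) are pairwise distinct. (b) If ι(s) is a cyclic shift of s (so n is even), then F̃^{n/2}(s^−) = s^+, and the extended strings s^−, F̃(s^−), …, F̃^{n−1}(s^−) are pairwise distinct. -/
open Finset

namespace Necklaces

variable {n : ℕ}

/-- The cyclic left shift `L` on binary strings of length `n`. -/
def shiftL (s : Fin n → Bool) : Fin n → Bool :=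
  fun i => s ⟨(i.val + 1) % n, Nat.mod_lt _ (Nat.lt_of_le_of_lt (Nat.zero_le _) i.isLt)⟩

/-- Digitwise inversion (complement) `ι`. -/
def inv (s : Fin n → Bool) : Fin n → Bool := fun i => !(s i)

/-- A string is primitive if no nontrivial cyclic shift fixes it. -/
def Primitive (s : Fin n → Bool) : Prop :=
  ∀ k : ℕ, 0 < k → k < n → shiftL^[k] s ≠ s

/-- The necklace `⟨s⟩`: the orbit of `s` under cyclic shifts. -/
def necklace (s : Fin n → Bool) : Set (Fin n → Bool) :=
  {t | ∃ k : ℕ, t = shiftL^[k] s}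

/-- The necklace inversion class `[s]`: the orbit of `s` under cyclic shifts and inversion. -/
def invClass (s : Fin n → Bool) : Set (Fin n → Bool) :=
  {t | ∃ k : ℕ, t = shiftL^[k] s ∨ t = inv (shiftL^[k] s)}

/-- The number of 1's in `s`. -/
def onesCard (s : Fin n → Bool) : ℕ := (univ.filter (fun i => s i = true)).card

/-- The mod-2 partial sum map `Ξ`: the `i`-th digit of `Ξ(s)` is `s₁+⋯+sᵢ (mod 2)`. -/
def xi (s : Fin n → Bool) : Fin n → Bool :=
  fun i => decide (Odd ((Finset.Iic i).filter (fun j => s j = true)).card)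

/-- `ι(s)` is a cyclic shift of `s`. -/
def ReflexiveStr (s : Fin n → Bool) : Prop := ∃ k : ℕ, shiftL^[k] s = inv s

/-- `s` consists of two copies of a primitive string of length `n/2`
with an odd number of 1's. -/
def TwoCopies (s : Fin n → Bool) : Prop :=
  n % 2 = 0 ∧ shiftL^[n / 2] s = s ∧ (∀ k : ℕ, 0 < k → k < n / 2 → shiftL^[k] s ≠ s) ∧
    Odd ((univ.filter (fun i : Fin n => i.val < n / 2 ∧ s i = true)).card)

/-- `s` generates a necklace belonging to `Ñ⁺(n)`. -/
def GoodPlus (s : Fin n → Bool) : Prop :=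
  (Primitive s ∧ Even (onesCard s)) ∨ TwoCopies s

/-- The set `Ñ⁺(n)` of necklaces. -/
def NtildePlus (n : ℕ) : Set (Set (Fin n → Bool)) :=
  {N | ∃ s : Fin n → Bool, GoodPlus s ∧ N = necklace s}

/-- The set `N̄(n)` of necklace inversion classes of primitive strings. -/
def Nbar (n : ℕ) : Set (Set (Fin n → Bool)) :=
  {C | ∃ s : Fin n → Bool, Primitive s ∧ C = invClass s}

/-- Lexicographic order on strings, with `0 < 1` and the leftmost digit most significant. -/
def strLt (s t : Fin n → Bool) : Prop :=
  ∃ i : Fin n, (∀ j : Fin n, j < i → s j = t j) ∧ s i < t i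

/-- Extended lexicographic order on extended strings `s^b`
(`b = false` encodes `−`, `b = true` encodes `+`). -/
def extLt (p q : (Fin n → Bool) × Bool) : Prop :=
  strLt p.1 q.1 ∨ (p.1 = q.1 ∧ p.2 < q.2)

/-- The twisted shift operator `F`. -/
def twistF (s : Fin n → Bool) : Fin n → Bool :=
  if h : 0 < n then
    (if shiftL s ⟨0, h⟩ = true then shiftL s else inv (shiftL s))
  else s

/-- The extended twisted shift operator `F̃`. -/
def extF (p : (Fin n → Bool) × Bool) : (Fin n → Bool) × Bool :=
  if h : 0 < n then
    (if twistF p.1 ⟨n - 1, Nat.sub_lt h Nat.one_pos⟩ = true then (twistF p.1, p.2)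
     else (twistF p.1, !p.2))
  else p

/-- Cyclic successor on `Fin n`. -/
def finSucc (i : Fin n) : Fin n :=
  ⟨(i.val + 1) % n, Nat.mod_lt _ (Nat.lt_of_le_of_lt (Nat.zero_le _) i.isLt)⟩

open scoped Classical in
/-- The (0-based) lexicographic rank of `μ i` among `μ₁,…,μₙ`:
the number of indices `j` with `μ j` strictly smaller than `μ i`. -/
noncomputable def rankOf {X : Type*} (lt : X → X → Prop) (μ : Fin n → X) (i : Fin n) : ℕ :=
  (univ.filter (fun j => lt (μ j) (μ i))).card

/-- `σ` is the cyclic permutation `(r₁ r₂ ⋯ rₙ)` built from the ranks `rᵢ` of `μᵢ`: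
`σ(rᵢ) = r_{i+1}` (indices mod `n`). -/
def BuiltFrom {X : Type*} (lt : X → X → Prop) (μ : Fin n → X) (σ : Equiv.Perm (Fin n)) : Prop :=
  ∀ i j : Fin n, rankOf lt μ i = j.val → (σ j).val = rankOf lt μ (finSucc i)

/-- `σ` consists of a single `n`-cycle. -/
def IsCyclicPerm (σ : Equiv.Perm (Fin n)) : Prop :=
  ∀ x y : Fin n, ∃ k : ℕ, (σ ^ k) x = y

/-- `σ` is unimodal: decreasing on an initial segment, then increasing. -/
def IsUnimodal (σ : Equiv.Perm (Fin n)) : Prop :=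
  ∃ m : Fin n, (∀ i j : Fin n, i ≤ j → j ≤ m → σ j ≤ σ i) ∧
    (∀ i j : Fin n, m ≤ i → i ≤ j → σ i ≤ σ j)

/-- Cyclic unimodal permutations. -/
def CUPperm (σ : Equiv.Perm (Fin n)) : Prop := IsCyclicPerm σ ∧ IsUnimodal σ

/-- The string `A(σ)` obtained from the itinerary of `σ` (`+ ↦ 0`, `− ↦ 1`),
with the last digit chosen so that the total number of 1's is even.
(Here `m = σ⁻¹ 0` is the unique element with `σ m` least.) -/
def Astr [NeZero n] (σ : Equiv.Perm (Fin n)) : Fin n → Bool :=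
  fun i =>
    if i.val + 1 < n then decide ((σ ^ (i.val + 1)) (σ⁻¹ 0) < σ⁻¹ 0)
    else decide (Odd ((univ.filter (fun j : Fin n =>
      j.val + 1 < n ∧ (σ ^ (j.val + 1)) (σ⁻¹ 0) < σ⁻¹ 0)).card))

/-- The string used for `Ψ(σ)`: itinerary digits with the last digit chosen
so that the total number of 1's is odd. -/
def BstrOdd [NeZero n] (σ : Equiv.Perm (Fin n)) : Fin n → Bool :=
  fun i =>
    if i.val + 1 < n then decide ((σ ^ (i.val + 1)) (σ⁻¹ 0) < σ⁻¹ 0)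
    else !(decide (Odd ((univ.filter (fun j : Fin n =>
      j.val + 1 < n ∧ (σ ^ (j.val + 1)) (σ⁻¹ 0) < σ⁻¹ 0)).card)))

/-- The itinerary of a cyclic unimodal permutation: `none` encodes `⋆` (position `n`),
`some true` encodes `−` (i.e. `σⁱ(m) < m`), `some false` encodes `+` (i.e. `σⁱ(m) > m`). -/
def itin [NeZero n] (σ : Equiv.Perm (Fin n)) : Fin n → Option Bool :=
  fun i =>
    if i.val + 1 = n then none
    else some (decide ((σ ^ (i.val + 1)) (σ⁻¹ 0) < σ⁻¹ 0))

/-- `σ` arises from the class `C` by the construction defining `λ`: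
for some representative `t` of `C` beginning with `1`, `σ` is the cyclic permutation
built from the lexicographic ranks of the iterates of `t` under `F` (non-reflexive case)
or of `t^−` under `F̃` (reflexive case). -/
def LamRel [NeZero n] (C : Set (Fin n → Bool)) (σ : Equiv.Perm (Fin n)) : Prop :=
  ∃ t : Fin n → Bool, t 0 = true ∧ C = invClass t ∧
    ((¬ ReflexiveStr t ∧ BuiltFrom strLt (fun i : Fin n => twistF^[i.val] t) σ) ∨
     (ReflexiveStr t ∧ BuiltFrom extLt (fun i : Fin n => extF^[i.val] (t, false)) σ))

/-- `σ` arises from the representative `s` by the Weiss–Rogers construction `Φ`: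
`σ` is the cyclic permutation built from the lexicographic ranks of
`νᵢ = ι(Ξ(L^{i-1}(s)))`. -/
def PhiBuilt (s : Fin n → Bool) (σ : Equiv.Perm (Fin n)) : Prop :=
  BuiltFrom strLt (fun i : Fin n => inv (xi (shiftL^[i.val] s))) σ

end Necklaces


namespace Necklaces

variable {n : ℕ}

lemma shiftL_apply' (hn : 0 < n) (s : Fin n → Bool) (k : ℕ) (i : Fin n) :
    shiftL^[k] s i = s ⟨(i.val + k) % n, Nat.mod_lt _ hn⟩ := by
  induction k generalizing i with
  | zero =>
    simp only [Function.iterate_zero, id_eq]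
    congr 1
    exact (Fin.ext (by simp [Nat.mod_eq_of_lt i.isLt])).symm
  | succ k ih =>
    rw [Function.iterate_succ_apply']
    show shiftL^[k] s ⟨(i.val + 1) % n, Nat.mod_lt _ hn⟩ = _
    rw [ih]
    congr 1
    apply Fin.ext
    show ((i.val + 1) % n + k) % n = (i.val + (k + 1)) % n
    rw [Nat.mod_add_mod]
    congr 1
    omega

lemma shiftL_inv_comm (s : Fin n → Bool) (k : ℕ) :
    shiftL^[k] (inv s) = inv (shiftL^[k] s) := by
  induction k with
  | zero => rfl
  | succ k ih => rw [Function.iterate_succ_apply', Function.iterate_succ_apply', ih]; rfl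

lemma inv_inv (s : Fin n → Bool) : inv (inv s) = s := by
  funext i; simp [inv]

lemma inv_injective : Function.Injective (inv : (Fin n → Bool) → (Fin n → Bool)) := by
  intro a b h
  funext i
  have := congrFun h i
  simp only [inv] at this
  exact Bool.not_inj this

lemma shiftL_mod (hn : 0 < n) (s : Fin n → Bool) (k : ℕ) :
    shiftL^[k] s = shiftL^[k % n] s := by
  funext i
  rw [shiftL_apply' hn, shiftL_apply' hn]
  congr 1
  apply Fin.ext
  show (i.val + k) % n = (i.val + k % n) % n
  conv_lhs => rw [Nat.add_mod]
  conv_rhs => rw [Nat.add_mod, Nat.mod_mod_of_dvd _ dvd_rfl]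

lemma shiftL_n (hn : 0 < n) (s : Fin n → Bool) : shiftL^[n] s = s := by
  rw [shiftL_mod hn, Nat.mod_self]
  rfl

lemma prim_mod {s : Fin n → Bool} (hn : 0 < n) (hprim : Primitive s) {k : ℕ}
    (h : shiftL^[k] s = s) : k % n = 0 := by
  by_contra hk
  exact hprim (k % n) (Nat.pos_of_ne_zero hk) (Nat.mod_lt _ hn)
    ((shiftL_mod hn s k).symm.trans h)

lemma shift_inj (hn : 0 < n) {s : Fin n → Bool} (hprim : Primitive s)
    {i j : Fin n} (h : shiftL^[i.val] s = shiftL^[j.val] s) : i = j := by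
  have key : ∀ a b : ℕ, a < b → b < n → shiftL^[a] s = shiftL^[b] s → False := by
    intro a b hab hbn heq
    have h2 := congrArg (shiftL^[n - b]) heq
    rw [← Function.iterate_add_apply, ← Function.iterate_add_apply] at h2
    have hnb : n - b + b = n := by omega
    rw [hnb, shiftL_n hn] at h2
    have := prim_mod hn hprim h2
    rw [Nat.mod_eq_of_lt (by omega)] at this
    omega
  rcases lt_trichotomy i.val j.val with h' | h' | h'
  · exact absurd (key _ _ h' j.isLt h) (fun x => x)
  · exact Fin.ext h'
  · exact absurd (key _ _ h' i.isLt h.symm) (fun x => x)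

lemma refl_of_shift_inv (hn : 0 < n) {s : Fin n → Bool} {a b : ℕ} (hb : b ≤ n)
    (h : shiftL^[a] s = inv (shiftL^[b] s)) : ReflexiveStr s := by
  refine ⟨n - b + a, ?_⟩
  have h2 := congrArg (shiftL^[n - b]) h
  rw [← Function.iterate_add_apply, shiftL_inv_comm, ← Function.iterate_add_apply] at h2
  have hnb : n - b + b = n := by omega
  rw [hnb, shiftL_n hn] at h2
  exact h2

lemma twistF_iter (hn : 0 < n) (s : Fin n → Bool) (h1 : s ⟨0, hn⟩ = true) (k : ℕ) :
    twistF^[k] s =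
      if s ⟨k % n, Nat.mod_lt _ hn⟩ = true then shiftL^[k] s else inv (shiftL^[k] s) := by
  induction k with
  | zero =>
    simp only [Function.iterate_zero, id_eq, Nat.zero_mod]
    exact (if_pos h1).symm
  | succ k ih =>
    rw [Function.iterate_succ_apply', ih]
    have hss : shiftL (shiftL^[k] s) = shiftL^[k+1] s :=
      (Function.iterate_succ_apply' shiftL k s).symm
    have hs1 : shiftL (shiftL^[k] s) ⟨0, hn⟩ = s ⟨(k + 1) % n, Nat.mod_lt _ hn⟩ := by
      rw [hss, shiftL_apply' hn]
      congr 1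
      exact Fin.ext (by simp)
    have hs2 : shiftL (inv (shiftL^[k] s)) ⟨0, hn⟩ = !(shiftL (shiftL^[k] s) ⟨0, hn⟩) := rfl
    rw [hs1] at hs2
    have hcomm : shiftL (inv (shiftL^[k] s)) = inv (shiftL^[k+1] s) := by
      rw [← hss]
      rfl
    by_cases hk : s ⟨k % n, Nat.mod_lt _ hn⟩ = true
    · rw [if_pos hk]
      unfold twistF
      rw [dif_pos hn]
      by_cases hk1 : s ⟨(k + 1) % n, Nat.mod_lt _ hn⟩ = true
      · rw [if_pos (hs1.trans hk1), if_pos hk1, hss]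
      · rw [if_neg (fun hc => hk1 (hs1.symm.trans hc)), if_neg hk1, hss]
    · rw [if_neg hk]
      unfold twistF
      rw [dif_pos hn]
      by_cases hk1 : s ⟨(k + 1) % n, Nat.mod_lt _ hn⟩ = true
      · rw [if_neg (by rw [hs2, hk1]; simp), if_pos hk1, hcomm, inv_inv]
      · rw [if_pos (by rw [hs2]; simp at hk1; rw [hk1]; rfl), if_neg hk1, hcomm]

lemma extF_iter (hn : 0 < n) (s : Fin n → Bool) (h1 : s ⟨0, hn⟩ = true) (k : ℕ) :
    extF^[k] (s, false) = (twistF^[k] s, !(s ⟨k % n, Nat.mod_lt _ hn⟩)) := by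
  induction k with
  | zero =>
    simp only [Function.iterate_zero, id_eq, Nat.zero_mod, h1]
    rfl
  | succ k ih =>
    rw [Function.iterate_succ_apply', ih]
    have hT : twistF (twistF^[k] s) = twistF^[k+1] s := (Function.iterate_succ_apply' _ _ _).symm
    have hidx : (n - 1 + (k + 1)) % n = k % n := by
      rw [show n - 1 + (k + 1) = n + k by omega, Nat.add_mod_left]
    have hlast : twistF^[k+1] s ⟨n - 1, Nat.sub_lt hn Nat.one_pos⟩ =
        (if s ⟨(k + 1) % n, Nat.mod_lt _ hn⟩ = true
          then s ⟨k % n, Nat.mod_lt _ hn⟩ else !(s ⟨k % n, Nat.mod_lt _ hn⟩)) := by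
      rw [twistF_iter hn s h1 (k + 1)]
      by_cases h : s ⟨(k + 1) % n, Nat.mod_lt _ hn⟩ = true
      · rw [if_pos h, if_pos h, shiftL_apply' hn]
        congr 1
        exact Fin.ext hidx
      · rw [if_neg h, if_neg h]
        have hrfl : inv (shiftL^[k+1] s) ⟨n - 1, Nat.sub_lt hn Nat.one_pos⟩ =
            !(shiftL^[k+1] s ⟨n - 1, Nat.sub_lt hn Nat.one_pos⟩) := rfl
        rw [hrfl, shiftL_apply' hn]
        congr 2
        exact Fin.ext hidx
    unfold extF
    rw [dif_pos hn]
    simp only [Prod.fst, Prod.snd]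
    rw [hT, hlast]
    by_cases hk1 : s ⟨(k + 1) % n, Nat.mod_lt _ hn⟩ = true
    · rw [if_pos hk1]
      by_cases hk : s ⟨k % n, Nat.mod_lt _ hn⟩ = true
      · rw [if_pos hk, hk, hk1]
      · simp only [Bool.not_eq_true] at hk
        rw [if_neg (by rw [hk]; simp), hk, hk1]
        simp
    · rw [if_neg hk1]
      simp only [Bool.not_eq_true] at hk1
      by_cases hk : s ⟨k % n, Nat.mod_lt _ hn⟩ = true
      · rw [if_neg (by rw [hk]; simp), hk, hk1]
        simp
      · simp only [Bool.not_eq_true] at hk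
        rw [if_pos (by rw [hk]; rfl), hk, hk1]

end Necklaces

namespace Necklaces

/-- Let `s ∈ {0,1}ⁿ` be primitive with first digit 1.
(a) If `ι(s)` is not a cyclic shift of `s`, then `s, F(s), …, F^{n−1}(s)` are pairwise
distinct. (b) If `ι(s)` is a cyclic shift of `s`, then `n` is even,
`F̃^{n/2}(s^−) = s^+`, and `s^−, F̃(s^−), …, F̃^{n−1}(s^−)` are pairwise distinct. -/
theorem twistF_orbit_distinct (n : ℕ) [NeZero n] (s : Fin n → Bool)
    (hprim : Primitive s) (h1 : s 0 = true) :
    (¬ ReflexiveStr s → Function.Injective (fun i : Fin n => twistF^[i.val] s)) ∧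
    (ReflexiveStr s →
      n % 2 = 0 ∧ extF^[n / 2] (s, false) = (s, true) ∧
      Function.Injective (fun i : Fin n => extF^[i.val] (s, false))) := by
  have hn : 0 < n := Nat.pos_of_ne_zero (NeZero.ne n)
  have h1' : s ⟨0, hn⟩ = true := by
    have h0 : (⟨0, hn⟩ : Fin n) = 0 := Fin.ext (by simp)
    rw [h0]; exact h1
  have hmod : ∀ i : Fin n, (⟨i.val % n, Nat.mod_lt _ hn⟩ : Fin n) = i :=
    fun i => Fin.ext (Nat.mod_eq_of_lt i.isLt)
  constructor
  · intro hrefl i j hij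
    have hij' : twistF^[i.val] s = twistF^[j.val] s := hij
    rw [twistF_iter hn s h1' i.val, twistF_iter hn s h1' j.val, hmod i, hmod j] at hij'
    by_cases hi : s i = true <;> by_cases hj : s j = true
    · rw [if_pos hi, if_pos hj] at hij'
      exact shift_inj hn hprim hij'
    · rw [if_pos hi, if_neg hj] at hij'
      exact absurd (refl_of_shift_inv hn (le_of_lt j.isLt) hij') hrefl
    · rw [if_neg hi, if_pos hj] at hij'
      have hsw : shiftL^[j.val] s = inv (shiftL^[i.val] s) := hij'.symm
      exact absurd (refl_of_shift_inv hn (le_of_lt i.isLt) hsw) hrefl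
    · rw [if_neg hi, if_neg hj] at hij'
      exact shift_inj hn hprim (inv_injective hij')
  · intro hrefl
    obtain ⟨k0, hk0⟩ := hrefl
    obtain ⟨r, hr⟩ : ∃ r, r = k0 % n := ⟨_, rfl⟩
    have hrlt : r < n := hr ▸ Nat.mod_lt _ hn
    have hrs : shiftL^[r] s = inv s := by
      rw [hr, ← shiftL_mod hn, hk0]
    have hrpos : 0 < r := by
      rcases Nat.eq_zero_or_pos r with h0 | h
      · exfalso
        rw [h0] at hrs
        have hcontra := congrFun hrs ⟨0, hn⟩
        simp only [Function.iterate_zero, id_eq, inv, h1'] at hcontra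
        exact absurd hcontra (by decide)
      · exact h
    have h2r : shiftL^[r + r] s = s := by
      rw [Function.iterate_add_apply, hrs, shiftL_inv_comm, hrs, inv_inv]
    have h2r0 : (r + r) % n = 0 := prim_mod hn hprim h2r
    have hn2r : r + r = n := by
      rcases lt_or_ge (r + r) n with h | h
      · rw [Nat.mod_eq_of_lt h] at h2r0; omega
      · rw [Nat.mod_eq_sub_mod h, Nat.mod_eq_of_lt (by omega)] at h2r0
        omega
    have hsr : s ⟨r, hrlt⟩ = false := by
      have h3 := congrFun hrs ⟨0, hn⟩
      rw [shiftL_apply' hn] at h3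
      simp only [inv, h1'] at h3
      rw [show (⟨(0 + r) % n, Nat.mod_lt _ hn⟩ : Fin n) = ⟨r, hrlt⟩ from
        Fin.ext (by simp [Nat.mod_eq_of_lt hrlt])] at h3
      simpa using h3
    have hrr : (⟨r % n, Nat.mod_lt _ hn⟩ : Fin n) = ⟨r, hrlt⟩ :=
      Fin.ext (Nat.mod_eq_of_lt hrlt)
    refine ⟨by omega, ?_, ?_⟩
    · have hndiv : n / 2 = r := by omega
      rw [hndiv, extF_iter hn s h1' r, twistF_iter hn s h1' r, hrr, hsr]
      rw [if_neg (by simp), hrs, inv_inv]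
      rfl
    · intro i j hij
      have hij' : extF^[i.val] (s, false) = extF^[j.val] (s, false) := hij
      rw [extF_iter hn s h1' i.val, extF_iter hn s h1' j.val] at hij'
      have hfst := congrArg Prod.fst hij'
      have hsnd := congrArg Prod.snd hij'
      simp only [Prod.fst, Prod.snd] at hfst hsnd
      rw [hmod i, hmod j] at hsnd
      have hs_eq : s i = s j := Bool.not_inj hsnd
      rw [twistF_iter hn s h1' i.val, twistF_iter hn s h1' j.val, hmod i, hmod j] at hfst
      by_cases hi : s i = true
      · rw [if_pos hi, if_pos (hs_eq ▸ hi)] at hfst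
        exact shift_inj hn hprim hfst
      · rw [if_neg hi, if_neg (fun hc => hi (hs_eq.trans hc))] at hfst
        exact shift_inj hn hprim (inv_injective hfst)

end Necklaces
end

section
/- Let y ∈ [0,1/2] have primitive period m under the tent map T, with T-cycle C = {y, T(y), …, T^{m−1}(y)}. Then there exists x ∈ [0,1) that is periodic under the doubling map D with primitive period equal to m or 2m and whose D-cycle is mapped onto C by the folding map π; moreover, any two D-cycles of D-periodic points with this property either coincide or are mapped to each other by the involution I. -/
namespace Necklaces

/-- The modified tent map `T′` on `[1/2,1]`. -/
noncomputable def tentT' (x : ℝ) : ℝ := if x ≤ 3 / 4 then 2 * (1 - x) else 2 * x - 1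

/-- The extended modified tent map `T̃′` on `[1/2,1] × {+,−}`
(`true` encodes `+`, `false` encodes `−`). -/
noncomputable def extT' (p : ℝ × Bool) : ℝ × Bool :=
  if 3 / 4 < p.1 then (tentT' p.1, p.2) else (tentT' p.1, !p.2)

/-- The extended order: `x^a < y^b` iff `x < y`, or `x = y` and `a = −`, `b = +`. -/
def extRLt (p q : ℝ × Bool) : Prop := p.1 < q.1 ∨ (p.1 = q.1 ∧ p.2 < q.2)

/-- The mod-1 doubling map `D(x) = 2x (mod 1)`. -/
noncomputable def Dmap (x : ℝ) : ℝ := Int.fract (2 * x)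

/-- The tent map `T` on `[0,1/2]`. -/
noncomputable def Tmap (x : ℝ) : ℝ := if x ≤ 1 / 4 then 2 * x else 1 - 2 * x

/-- The involution `I : x ↦ −x (mod 1)` on `[0,1)`. -/
noncomputable def Imap (x : ℝ) : ℝ := if x = 0 then 0 else 1 - x

/-- The folding map `π(x) = min(x, 1−x)`. -/
noncomputable def fold (x : ℝ) : ℝ := min x (1 - x)

/-- The cycle (forward orbit) of `x` under `f`. -/
def cycleSet (f : ℝ → ℝ) (x : ℝ) : Set ℝ := {y | ∃ k : ℕ, y = f^[k] x}

/-- `x` has primitive period `m` under `f`. -/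
def PrimPeriod (f : ℝ → ℝ) (x : ℝ) (m : ℕ) : Prop :=
  f^[m] x = x ∧ ∀ k : ℕ, 0 < k → k < m → f^[k] x ≠ x

end Necklaces

namespace Necklaces

lemma Dmap_mem (x : ℝ) : Dmap x ∈ Set.Ico (0:ℝ) 1 :=
  ⟨Int.fract_nonneg _, Int.fract_lt_one _⟩

lemma Diter_mem (x : ℝ) (hx : x ∈ Set.Ico (0:ℝ) 1) (k : ℕ) :
    Dmap^[k] x ∈ Set.Ico (0:ℝ) 1 := by
  cases k with
  | zero => exact hx
  | succ n => rw [Function.iterate_succ_apply']; exact Dmap_mem _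

lemma Dmap_low {x : ℝ} (h0 : 0 ≤ x) (h1 : x < 1/2) : Dmap x = 2 * x := by
  unfold Dmap
  rw [Int.fract_eq_self.mpr ⟨by linarith, by linarith⟩]

lemma Dmap_high {x : ℝ} (h0 : 1/2 ≤ x) (h1 : x < 1) : Dmap x = 2 * x - 1 := by
  unfold Dmap
  have h : Int.fract (2 * x) = Int.fract (2 * x - 1) := by
    rw [show (2:ℝ) * x - 1 = 2 * x + ((-1:ℤ):ℝ) by push_cast; ring, Int.fract_add_intCast]
  rw [h, Int.fract_eq_self.mpr ⟨by linarith, by linarith⟩]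

lemma fold_D {x : ℝ} (hx : x ∈ Set.Ico (0:ℝ) 1) : fold (Dmap x) = Tmap (fold x) := by
  obtain ⟨h0, h1⟩ := hx
  rcases lt_or_ge x (1/2) with hx2 | hx2
  · rw [Dmap_low h0 hx2]
    unfold fold Tmap
    rw [min_eq_left (by linarith : x ≤ 1 - x)]
    rcases le_or_gt x (1/4) with h4 | h4
    · rw [if_pos h4, min_eq_left (by linarith)]
    · rw [if_neg (by linarith), min_eq_right (by linarith)]
  · rw [Dmap_high hx2 h1]
    unfold fold Tmap
    rw [min_eq_right (by linarith : 1 - x ≤ x)]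
    rcases lt_or_ge x (3/4) with h4 | h4
    · rw [if_neg (by intro h; linarith), min_eq_left (by linarith)]; ring
    · rw [if_pos (by linarith), min_eq_right (by linarith)]; ring

lemma fold_D_iter {x : ℝ} (hx : x ∈ Set.Ico (0:ℝ) 1) (k : ℕ) :
    fold (Dmap^[k] x) = Tmap^[k] (fold x) := by
  induction k with
  | zero => rfl
  | succ n ih =>
    rw [Function.iterate_succ_apply', Function.iterate_succ_apply',
      fold_D (Diter_mem x hx n), ih]

lemma fold_cases {z t : ℝ} (h : fold z = t) : z = t ∨ z = 1 - t := by
  unfold fold at h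
  rcases le_total z (1 - z) with hz | hz
  · left; rw [min_eq_left hz] at h; exact h
  · right; rw [min_eq_right hz] at h; linarith

lemma Imap_ne {x : ℝ} (h : x ≠ 0) : Imap x = 1 - x := by
  unfold Imap; rw [if_neg h]

lemma ID_comm (x : ℝ) : Imap (Dmap x) = Dmap (Imap x) := by
  by_cases hx : x = 0
  · subst hx; simp [Imap, Dmap]
  · rw [Imap_ne hx]
    have h2 : Dmap (1 - x) = Int.fract (-(2 * x)) := by
      unfold Dmap
      have h : 2 * (1 - x) = -(2 * x) + ((2:ℤ):ℝ) := by push_cast; ring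
      rw [h, Int.fract_add_intCast]
    rw [h2]
    unfold Imap Dmap
    by_cases hf : Int.fract (2 * x) = 0
    · rw [if_pos hf, Int.fract_neg_eq_zero.mpr hf]
    · rw [if_neg hf, Int.fract_neg hf]

lemma ID_iter (x : ℝ) (k : ℕ) : Imap (Dmap^[k] x) = Dmap^[k] (Imap x) := by
  induction k with
  | zero => rfl
  | succ n ih =>
    rw [Function.iterate_succ_apply', Function.iterate_succ_apply', ID_comm, ih]

lemma iterate_mul_period (f : ℝ → ℝ) (x : ℝ) (p : ℕ) (hp : f^[p] x = x) (n : ℕ) :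
    f^[n * p] x = x := by
  induction n with
  | zero => simp
  | succ n ih => rw [Nat.succ_mul, Function.iterate_add_apply, hp, ih]

lemma cycle_shift (f : ℝ → ℝ) (x : ℝ) (p : ℕ) (hp0 : 0 < p) (hp : f^[p] x = x) (k : ℕ) :
    cycleSet f (f^[k] x) = cycleSet f x := by
  obtain ⟨q, rfl⟩ : ∃ q, p = q + 1 := ⟨p - 1, by omega⟩
  ext w
  constructor
  · rintro ⟨j, rfl⟩
    exact ⟨j + k, by rw [Function.iterate_add_apply]⟩
  · rintro ⟨j, rfl⟩
    refine ⟨j + k * q, ?_⟩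
    have h1 : j + k * q + k = j + k * (q + 1) := by ring
    rw [← Function.iterate_add_apply, h1, Function.iterate_add_apply,
      iterate_mul_period f x (q + 1) hp k]

lemma cycle_I (x : ℝ) : Imap '' cycleSet Dmap x = cycleSet Dmap (Imap x) := by
  ext w
  constructor
  · rintro ⟨v, ⟨k, rfl⟩, rfl⟩
    exact ⟨k, ID_iter x k⟩
  · rintro ⟨k, rfl⟩
    exact ⟨Dmap^[k] x, ⟨k, rfl⟩, ID_iter x k⟩

lemma Tzero (k : ℕ) : Tmap^[k] 0 = 0 := by
  induction k with
  | zero => rfl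
  | succ n ih => rw [Function.iterate_succ_apply', ih]; norm_num [Tmap]

lemma Dzero (k : ℕ) : Dmap^[k] 0 = 0 := by
  induction k with
  | zero => rfl
  | succ n ih => rw [Function.iterate_succ_apply', ih]; simp [Dmap]

/-- Let `y ∈ [0,1/2]` have primitive period `m` under the tent map `T`,
with `T`-cycle `C`. Then there exists `x ∈ [0,1)`, periodic under the doubling map `D`
with primitive period `m` or `2m`, whose `D`-cycle is mapped onto `C` by the folding map
`π`; moreover, any two `D`-cycles of `D`-periodic points with this property either
coincide or are mapped to each other by the involution `I`. -/
theorem tent_cycle_lifts (m : ℕ) (hm : 0 < m) (y : ℝ) (hy : y ∈ Set.Icc (0 : ℝ) (1 / 2))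
    (hper : PrimPeriod Tmap y m) :
    (∃ x : ℝ, x ∈ Set.Ico (0 : ℝ) 1 ∧
      (PrimPeriod Dmap x m ∨ PrimPeriod Dmap x (2 * m)) ∧
      fold '' cycleSet Dmap x = cycleSet Tmap y) ∧
    (∀ x₁ x₂ : ℝ, x₁ ∈ Set.Ico (0 : ℝ) 1 → x₂ ∈ Set.Ico (0 : ℝ) 1 →
      (∃ p : ℕ, 0 < p ∧ Dmap^[p] x₁ = x₁) → (∃ p : ℕ, 0 < p ∧ Dmap^[p] x₂ = x₂) →
      fold '' cycleSet Dmap x₁ = cycleSet Tmap y →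
      fold '' cycleSet Dmap x₂ = cycleSet Tmap y →
      (cycleSet Dmap x₁ = cycleSet Dmap x₂ ∨
        cycleSet Dmap x₂ = Imap '' cycleSet Dmap x₁)) := by
  have hy0 : (0:ℝ) ≤ y := hy.1
  have hy2 : y ≤ 1/2 := hy.2
  have hyI : y ∈ Set.Ico (0:ℝ) 1 := ⟨hy0, by linarith⟩
  have hfold : fold y = y := by unfold fold; exact min_eq_left (by linarith)
  have hiter : ∀ k, fold (Dmap^[k] y) = Tmap^[k] y := fun k => by
    rw [fold_D_iter hyI k, hfold]
  constructor
  · -- existence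
    have himg : fold '' cycleSet Dmap y = cycleSet Tmap y := by
      ext w
      constructor
      · rintro ⟨v, ⟨k, rfl⟩, rfl⟩; exact ⟨k, hiter k⟩
      · rintro ⟨k, rfl⟩; exact ⟨Dmap^[k] y, ⟨k, rfl⟩, hiter k⟩
    have hDm : fold (Dmap^[m] y) = y := by rw [hiter m, hper.1]
    rcases fold_cases hDm with hcase | hcase
    · exact ⟨y, hyI, Or.inl ⟨hcase, fun k hk hkm hDk =>
        hper.2 k hk hkm (by rw [← hiter k, hDk, hfold])⟩, himg⟩
    · -- D^[m] y = 1 - y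
      have hyhalf : y ≠ 1/2 := by
        intro h
        subst h
        have hm1 : Tmap^[m] ((1:ℝ)/2) = 0 := by
          obtain ⟨n, rfl⟩ : ∃ n, m = n + 1 := ⟨m - 1, by omega⟩
          rw [Function.iterate_succ_apply, show Tmap ((1:ℝ)/2) = 0 by norm_num [Tmap], Tzero]
        rw [hper.1] at hm1
        norm_num at hm1
      have hy0' : y ≠ 0 := by
        intro h; subst h; rw [Dzero] at hcase; norm_num at hcase
      have hIy : Imap y = 1 - y := Imap_ne hy0'
      have hI1y : Imap (1 - y) = y := by
        rw [Imap_ne (by intro h; linarith : (1:ℝ) - y ≠ 0)]; ring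
      have hD2m : Dmap^[2*m] y = y := by
        rw [two_mul, Function.iterate_add_apply, hcase, ← hIy, ← ID_iter, hcase, hI1y]
      refine ⟨y, hyI, Or.inr ⟨hD2m, fun k hk hk2m hDk => ?_⟩, himg⟩
      have hTk : Tmap^[k] y = y := by rw [← hiter k, hDk, hfold]
      rcases lt_trichotomy k m with h | h | h
      · exact hper.2 k hk h hTk
      · subst h; rw [hcase] at hDk; exact hyhalf (by linarith)
      · have hlow : 0 < 2*m - k := by omega
        have hhigh : 2*m - k < m := by omega
        have hD' : Dmap^[2*m - k] y = y := by
          have h2 := hD2m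
          rw [show 2*m = (2*m - k) + k by omega, Function.iterate_add_apply, hDk] at h2
          exact h2
        have hT' : Tmap^[2*m - k] y = y := by rw [← hiter, hD', hfold]
        exact hper.2 _ hlow hhigh hT'
  · -- uniqueness up to involution
    rintro x₁ x₂ hx₁ hx₂ ⟨p₁, hp₁, hper₁⟩ ⟨p₂, hp₂, hper₂⟩ hf₁ hf₂
    have h₁ : ∃ k, fold (Dmap^[k] x₁) = y := by
      have hym : y ∈ fold '' cycleSet Dmap x₁ := by rw [hf₁]; exact ⟨0, rfl⟩
      obtain ⟨v, ⟨k, rfl⟩, hv⟩ := hym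
      exact ⟨k, hv⟩
    have h₂ : ∃ k, fold (Dmap^[k] x₂) = y := by
      have hym : y ∈ fold '' cycleSet Dmap x₂ := by rw [hf₂]; exact ⟨0, rfl⟩
      obtain ⟨v, ⟨k, rfl⟩, hv⟩ := hym
      exact ⟨k, hv⟩
    obtain ⟨k₁, hk₁⟩ := h₁
    obtain ⟨k₂, hk₂⟩ := h₂
    have hm₁ := Diter_mem x₁ hx₁ k₁
    have hm₂ := Diter_mem x₂ hx₂ k₂
    have hc₁ : cycleSet Dmap x₁ = cycleSet Dmap (Dmap^[k₁] x₁) :=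
      (cycle_shift Dmap x₁ p₁ hp₁ hper₁ k₁).symm
    have hc₂ : cycleSet Dmap x₂ = cycleSet Dmap (Dmap^[k₂] x₂) :=
      (cycle_shift Dmap x₂ p₂ hp₂ hper₂ k₂).symm
    rcases fold_cases hk₁ with e₁ | e₁ <;> rcases fold_cases hk₂ with e₂ | e₂
    · left; rw [hc₁, hc₂, e₁, e₂]
    · have hypos : 0 < y := by have h := hm₂.2; rw [e₂] at h; linarith
      right
      rw [hc₁, hc₂, e₁, e₂, cycle_I, Imap_ne (ne_of_gt hypos)]
    · have hypos : 0 < y := by have h := hm₁.2; rw [e₁] at h; linarith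
      have hI1y : Imap (1 - y) = y := by
        rw [Imap_ne (by intro h; linarith : (1:ℝ) - y ≠ 0)]; ring
      right
      rw [hc₁, hc₂, e₁, e₂, cycle_I, hI1y]
    · left; rw [hc₁, hc₂, e₁, e₂]

end Necklaces
end

section
/- Let K be the field with 2ⁿ elements, φ : K → K the Frobenius x ↦ x², and β ∈ K an element such that (β, φ(β), …, φ^{n−1}(β)) is a basis of K over 𝔽₂. Define B : {0,1}ⁿ → K by B(s₁,…,sₙ) = Σ_{i=1}^{n} sᵢ·φ^{n−i}(β). Then: (i) B is a bijection; (ii) B(L(s)) = φ(B(s)) for every s, where L is the cyclic left shift; (iii) the trace Tr_{K/𝔽₂}(B(s)) equals s₁+⋯+sₙ mod 2. Consequently, B induces a bijection between binary necklaces of length n and orbits of φ on K, under which primitive necklaces of length n with an odd (resp. even) number of 1's correspond to orbits of size n whose elements have trace 1 (resp. trace 0), i.e. to monic irreducible polynomials of degree n over 𝔽₂ whose sum of roots is nonzero (resp. zero). -/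
open Finset

namespace Necklaces

/-- The map `B` sending a binary string to `Σᵢ sᵢ · φ^{n−i}(β)`, where `φ : x ↦ x²`
is the Frobenius. -/
def Bmap (n : ℕ) {K : Type*} [Field K] (β : K) (s : Fin n → Bool) : K :=
  ∑ i : Fin n, if s i = true then (fun x : K => x ^ 2)^[n - 1 - i.val] β else 0

/-- The orbit of `x` under the Frobenius `φ : x ↦ x²`. -/
def frobOrbit {K : Type*} [Field K] (x : K) : Set K :=
  {y | ∃ k : ℕ, y = (fun z : K => z ^ 2)^[k] x}


section Aux

lemma sq_iterate {K : Type*} [Monoid K] (k : ℕ) (x : K) :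
    (fun z : K => z ^ 2)^[k] x = x ^ 2 ^ k := by
  induction k generalizing x with
  | zero => simp
  | succ k ih =>
    rw [Function.iterate_succ_apply, ih, ← pow_mul]
    congr 1
    rw [pow_succ]
    ring

lemma shiftL_iterate_apply {n : ℕ} (k : ℕ) (s : Fin n → Bool) (i : Fin n) :
    shiftL^[k] s i = s ⟨(i.val + k) % n, Nat.mod_lt _ i.pos⟩ := by
  induction k generalizing s with
  | zero =>
    simp only [Function.iterate_zero, id_eq]
    congr 1
    exact Fin.ext (by simp [Nat.mod_eq_of_lt i.isLt])
  | succ k ih =>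
    rw [Function.iterate_succ_apply, ih (shiftL s)]
    simp only [shiftL]
    congr 1
    apply Fin.ext
    show ((i.val + k) % n + 1) % n = (i.val + (k + 1)) % n
    rw [Nat.mod_add_mod, Nat.add_assoc]

lemma shiftL_iterate_self {n : ℕ} (hn : 0 < n) (s : Fin n → Bool) :
    shiftL^[n] s = s := by
  funext i
  rw [shiftL_iterate_apply]
  congr 1
  exact Fin.ext (by simp [Nat.add_mod_right, Nat.mod_eq_of_lt i.isLt])

lemma shiftL_iterate_of_fix {n : ℕ} {s : Fin n → Bool} {k : ℕ} (hk : 0 < k)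
    (hfix : shiftL^[k] s = s) (m : ℕ) :
    shiftL^[m] s = shiftL^[m % k] s := by
  induction m using Nat.strong_induction_on with
  | _ m ih =>
    rcases Nat.lt_or_ge m k with h | h
    · rw [Nat.mod_eq_of_lt h]
    · rw [show m = (m - k) + k by omega, Function.iterate_add_apply, hfix,
        ih (m - k) (by omega)]
      congr 1
      exact (Nat.add_mod_right _ k).symm

lemma shiftL_iterate_mod {n : ℕ} (hn : 0 < n) (s : Fin n → Bool) (m : ℕ) :
    shiftL^[m] s = shiftL^[m % n] s :=
  shiftL_iterate_of_fix hn (shiftL_iterate_self hn s) m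

/-- The equivalence between `Bool` and `ZMod 2`. -/
def boolEq : Bool ≃ ZMod 2 :=
  ⟨fun b => if b then 1 else 0, fun c => decide (c = 1), by decide, by decide⟩

lemma zmod2_eq_zero {x : ZMod 2} (h : x ≠ 1) : x = 0 := by revert h; revert x; decide

end Aux

/-- Let `K` be the field with `2ⁿ` elements, `φ : x ↦ x²` the
Frobenius, and `β ∈ K` such that `(β, φ(β), …, φ^{n−1}(β))` is a basis of `K` over `𝔽₂`.
Then: (i) `B` is a bijection; (ii) `B(L(s)) = φ(B(s))`; (iii) the trace of `B(s)` equals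
the mod-2 sum of the digits of `s`. Consequently, `B` induces a bijection between binary
necklaces of length `n` and Frobenius orbits on `K`, under which primitive necklaces of
length `n` with an odd (resp. even) number of 1's correspond to orbits of size `n` whose
elements have trace 1 (resp. trace 0), i.e. to monic irreducible polynomials of degree
`n` over `𝔽₂` whose sum of roots is nonzero (resp. zero). -/
theorem reutenauer_bijection (n : ℕ) (hn : 0 < n) (K : Type*) [Field K] [Fintype K]
    [Algebra (ZMod 2) K] (hcard : Fintype.card K = 2 ^ n) (β : K)
    (hβ : ∃ bas : Module.Basis (Fin n) (ZMod 2) K,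
      ∀ i : Fin n, bas i = (fun x : K => x ^ 2)^[i.val] β) :
    Function.Bijective (Bmap n β) ∧
    (∀ s : Fin n → Bool, Bmap n β (shiftL s) = (Bmap n β s) ^ 2) ∧
    (∀ s : Fin n → Bool,
      Algebra.trace (ZMod 2) K (Bmap n β s) = if Odd (onesCard s) then 1 else 0) ∧
    (∀ s t : Fin n → Bool,
      necklace s = necklace t ↔ frobOrbit (Bmap n β s) = frobOrbit (Bmap n β t)) ∧
    (∀ s : Fin n → Bool, (Primitive s ∧ Odd (onesCard s)) ↔
      ((frobOrbit (Bmap n β s)).ncard = n ∧ Algebra.trace (ZMod 2) K (Bmap n β s) = 1)) ∧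
    (∀ s : Fin n → Bool, (Primitive s ∧ Even (onesCard s)) ↔
      ((frobOrbit (Bmap n β s)).ncard = n ∧ Algebra.trace (ZMod 2) K (Bmap n β s) = 0)) := by
  classical
  obtain ⟨bas, hbas⟩ := hβ
  haveI : NeZero n := ⟨hn.ne'⟩
  haveI : CharP K 2 := (Algebra.charP_iff (ZMod 2) K 2).mp (by infer_instance)
  haveI : Fact (Nat.Prime 2) := ⟨Nat.prime_two⟩
  haveI : FiniteDimensional (ZMod 2) K := Module.Finite.of_basis bas
  -- the digit-reversal equiv
  have hrev : ∀ i : Fin n, n - 1 - (n - 1 - (i : Fin n).val) = i.val := fun i => by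
    have := i.isLt; omega
  let erev : Fin n ≃ Fin n :=
    ⟨fun i => ⟨n - 1 - i.val, by omega⟩, fun i => ⟨n - 1 - i.val, by omega⟩,
     fun i => Fin.ext (hrev i), fun i => Fin.ext (hrev i)⟩
  -- φ^[n] = id
  have hφn : ∀ x : K, (fun z : K => z ^ 2)^[n] x = x := fun x => by
    rw [sq_iterate, ← hcard, FiniteField.pow_card]
  -- B as a sum over the basis
  have hB : ∀ s : Fin n → Bool, Bmap n β s =
      ∑ j : Fin n, (if s (erev j) = true then (1 : ZMod 2) else 0) • bas j := by
    intro s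
    refine Fintype.sum_equiv erev _ _ (fun i => ?_)
    have h1 : erev (erev i) = i := erev.right_inv i
    rw [h1, hbas (erev i)]
    show (if s i = true then (fun x : K => x ^ 2)^[n - 1 - i.val] β else 0) =
      (if s i = true then (1 : ZMod 2) else 0) • (fun x : K => x ^ 2)^[n - 1 - i.val] β
    split <;> simp
  -- bijectivity
  have hBfun : Bmap n β =
      ⇑((Equiv.arrowCongr erev boolEq).trans bas.equivFun.toEquiv.symm) := by
    funext s
    rw [hB s]
    show _ = bas.equivFun.symm (fun j => boolEq (s (erev.symm j)))
    rw [Module.Basis.equivFun_symm_apply]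
    refine Finset.sum_congr rfl (fun j _ => ?_)
    congr 1
  have hbij : Function.Bijective (Bmap n β) := by
    rw [hBfun]; exact Equiv.bijective _
  -- shift equivariance
  have hshift : ∀ s : Fin n → Bool, Bmap n β (shiftL s) = (Bmap n β s) ^ 2 := by
    intro s
    have hfr : (Bmap n β s) ^ 2 = frobenius K 2 (Bmap n β s) := rfl
    have hRHS : ∀ i : Fin n,
        frobenius K 2 (if s i = true then (fun x : K => x ^ 2)^[n - 1 - i.val] β else 0) =
        (if s i = true then (fun z : K => z ^ 2)^[(n - i.val) % n] β else 0) := by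
      intro i
      have hi := i.isLt
      split
      · show ((fun x : K => x ^ 2)^[n - 1 - i.val] β) ^ 2 = _
        rw [← Function.iterate_succ_apply' (fun x : K => x ^ 2) (n - 1 - i.val) β]
        rcases Nat.eq_zero_or_pos i.val with h0 | h0
        · have e1 : (n - 1 - i.val).succ = n := by omega
          have e2 : (n - i.val) % n = 0 := by rw [h0, Nat.sub_zero, Nat.mod_self]
          rw [e1, e2, hφn β]
          rfl
        · have e1 : (n - 1 - i.val).succ = n - i.val := by omega
          have e2 : (n - i.val) % n = n - i.val := Nat.mod_eq_of_lt (by omega)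
          rw [e1, e2]
      · exact map_zero _
    have hR : frobenius K 2 (Bmap n β s) =
        ∑ i : Fin n, (if s i = true then (fun z : K => z ^ 2)^[(n - i.val) % n] β else 0) := by
      rw [Bmap, map_sum]
      exact Finset.sum_congr rfl (fun i _ => hRHS i)
    rw [hfr, hR, Bmap]
    -- now reindex the left side
    refine Fintype.sum_equiv (Equiv.addLeft (1 : Fin n)) _ _ (fun i => ?_)
    have hval : ((1 : Fin n) + i).val = (i.val + 1) % n := by
      rw [Fin.add_def]
      show ((1 : Fin n).val + i.val) % n = (i.val + 1) % n
      rw [Fin.val_one', Nat.mod_add_mod, Nat.add_comm]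
    have hsh : shiftL s i = s ((1 : Fin n) + i) := by
      show s _ = s _
      congr 1
      exact Fin.ext hval.symm
    rw [hsh]
    show (if s ((1 : Fin n) + i) = true then (fun x : K => x ^ 2)^[n - 1 - i.val] β else 0) =
      (if s ((1 : Fin n) + i) = true
        then (fun z : K => z ^ 2)^[(n - ((1 : Fin n) + i).val) % n] β else 0)
    have hi := i.isLt
    have harg : (n - ((1 : Fin n) + i).val) % n = n - 1 - i.val := by
      rw [hval]
      rcases Nat.lt_or_ge (i.val + 1) n with h | h
      · rw [Nat.mod_eq_of_lt h, Nat.mod_eq_of_lt (by omega)]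
        omega
      · have h1 : i.val + 1 = n := by omega
        rw [h1, Nat.mod_self, Nat.sub_zero, Nat.mod_self]
        omega
    rw [harg]
  -- trace is Frobenius invariant
  let frobAlg : K ≃ₐ[ZMod 2] K := AlgEquiv.ofRingEquiv (f := frobeniusEquiv K 2)
    (fun c => by rw [frobeniusEquiv_def, ← map_pow, ZMod.pow_card])
  have htrsq : ∀ x : K, Algebra.trace (ZMod 2) K (x ^ 2) = Algebra.trace (ZMod 2) K x :=
    fun x => Algebra.trace_eq_of_algEquiv frobAlg x
  have htrIter : ∀ k : ℕ, Algebra.trace (ZMod 2) K ((fun z : K => z ^ 2)^[k] β) =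
      Algebra.trace (ZMod 2) K β := by
    intro k
    induction k with
    | zero => rfl
    | succ k ih => rw [Function.iterate_succ_apply' (fun z : K => z ^ 2) k β, htrsq, ih]
  -- trace β = 1
  have htrβ : Algebra.trace (ZMod 2) K β = 1 := by
    obtain ⟨y, hy⟩ := Algebra.trace_surjective (ZMod 2) K 1
    by_contra hne
    have h0 : Algebra.trace (ZMod 2) K β = 0 := zmod2_eq_zero hne
    have hy2 : Algebra.trace (ZMod 2) K y = 0 := by
      conv_lhs => rw [← bas.sum_repr y]
      rw [map_sum]
      refine Finset.sum_eq_zero (fun j _ => ?_)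
      rw [map_smul, hbas j, htrIter, h0, smul_zero]
    rw [hy] at hy2
    exact one_ne_zero hy2
  -- trace formula
  have htrace : ∀ s : Fin n → Bool,
      Algebra.trace (ZMod 2) K (Bmap n β s) = if Odd (onesCard s) then 1 else 0 := by
    intro s
    rw [Bmap, map_sum]
    have hterm : ∀ i : Fin n,
        Algebra.trace (ZMod 2) K (if s i = true then (fun x : K => x ^ 2)^[n - 1 - i.val] β else 0)
        = if s i = true then (1 : ZMod 2) else 0 := by
      intro i
      split
      · rw [htrIter, htrβ]
      · exact map_zero _
    rw [Finset.sum_congr rfl (fun i _ => hterm i), Finset.sum_boole]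
    show ((onesCard s : ℕ) : ZMod 2) = _
    rw [← ZMod.natCast_mod (onesCard s) 2]
    rcases Nat.even_or_odd (onesCard s) with h | h
    · rw [Nat.even_iff.mp h]
      simp [Nat.not_odd_iff_even.mpr h]
    · rw [Nat.odd_iff.mp h]
      simp [h]
  -- orbit description
  have hBL : ∀ (k : ℕ) (s : Fin n → Bool),
      Bmap n β (shiftL^[k] s) = (fun z : K => z ^ 2)^[k] (Bmap n β s) := by
    intro k s
    induction k with
    | zero => rfl
    | succ k ih =>
      rw [Function.iterate_succ_apply' shiftL k s, Function.iterate_succ_apply',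
        hshift, ih]
  have horb : ∀ s : Fin n → Bool, frobOrbit (Bmap n β s) = Bmap n β '' necklace s := by
    intro s
    ext y
    constructor
    · rintro ⟨k, rfl⟩
      exact ⟨shiftL^[k] s, ⟨k, rfl⟩, hBL k s⟩
    · rintro ⟨t, ⟨k, rfl⟩, rfl⟩
      exact ⟨k, hBL k s⟩
  -- necklace as finite set
  have hneckfin : ∀ s : Fin n → Bool,
      necklace s = ((Finset.range n).image (fun k => shiftL^[k] s) : Finset _) := by
    intro s
    ext t
    simp only [necklace, Set.mem_setOf_eq, Finset.coe_image, Set.mem_image,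
      Finset.mem_coe, Finset.mem_range]
    constructor
    · rintro ⟨k, rfl⟩
      exact ⟨k % n, Nat.mod_lt _ hn, (shiftL_iterate_mod hn s k).symm⟩
    · rintro ⟨k, _, rfl⟩
      exact ⟨k, rfl⟩
  -- primitivity iff orbit has n elements
  have hprimcard : ∀ s : Fin n → Bool, Primitive s ↔ (necklace s).ncard = n := by
    intro s
    rw [hneckfin s, Set.ncard_coe_finset]
    constructor
    · intro hp
      have hinj : Set.InjOn (fun k => shiftL^[k] s) ↑(Finset.range n) := by
        have key : ∀ a b : ℕ, a < b → b < n → shiftL^[a] s = shiftL^[b] s → False := by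
          intro a b hab hbn heq
          have h1 : shiftL^[(n - b) + a] s = shiftL^[(n - b) + b] s := by
            rw [Function.iterate_add_apply, Function.iterate_add_apply, heq]
          have h2 : (n - b) + b = n := by omega
          rw [h2, shiftL_iterate_self hn s] at h1
          exact hp ((n - b) + a) (by omega) (by omega) h1
        intro a ha b hb hab
        simp only [Finset.coe_range, Set.mem_Iio] at ha hb
        rcases lt_trichotomy a b with h | h | h
        · exact absurd (key a b h hb hab) not_false
        · exact h
        · exact absurd (key b a h ha hab.symm) not_false
      rw [Finset.card_image_of_injOn hinj, Finset.card_range]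
    · intro hc k hk0 hkn hfix
      have hmod := shiftL_iterate_of_fix hk0 hfix
      have hsub : (Finset.range n).image (fun k => shiftL^[k] s) ⊆
          (Finset.range k).image (fun k => shiftL^[k] s) := by
        intro t ht
        simp only [Finset.mem_image, Finset.mem_range] at ht ⊢
        obtain ⟨m, _, rfl⟩ := ht
        exact ⟨m % k, Nat.mod_lt _ hk0, (hmod m).symm⟩
      have := Finset.card_le_card hsub
      have h2 := Finset.card_image_le (s := Finset.range k) (f := fun k => shiftL^[k] s)
      rw [Finset.card_range] at h2
      omega
  have hncard : ∀ s : Fin n → Bool,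
      (frobOrbit (Bmap n β s)).ncard = (necklace s).ncard := by
    intro s
    rw [horb s, Set.ncard_image_of_injective _ hbij.injective]
  -- assemble
  refine ⟨hbij, hshift, htrace, ?_, ?_, ?_⟩
  · intro s t
    rw [horb s, horb t]
    exact (Set.image_eq_image hbij.injective).symm
  · intro s
    rw [hncard s]
    constructor
    · rintro ⟨hp, ho⟩
      exact ⟨((hprimcard s).mp hp), by rw [htrace s, if_pos ho]⟩
    · rintro ⟨hc, ht⟩
      refine ⟨(hprimcard s).mpr hc, ?_⟩
      by_contra ho
      rw [htrace s, if_neg ho] at ht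
      exact one_ne_zero ht.symm
  · intro s
    rw [hncard s]
    constructor
    · rintro ⟨hp, he⟩
      exact ⟨((hprimcard s).mp hp),
        by rw [htrace s, if_neg (Nat.not_odd_iff_even.mpr he)]⟩
    · rintro ⟨hc, ht⟩
      refine ⟨(hprimcard s).mpr hc, ?_⟩
      rw [htrace s] at ht
      by_contra he
      rw [if_pos (Nat.not_even_iff_odd.mp he)] at ht
      exact one_ne_zero ht

end Necklaces
end
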